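/- arXiv:1803.04344 — 8 statements merged into one kernel-verified Lean document; each statement's English description precedes it below -/
import Mathlib

section
/- Let M : ℝ → ℝ be positive and continuous, and let γ : [0,τ] → ℝ be any C¹, strictly monotonically decreasing curve with γ(0) = γ_i and γ(τ) = γ_f (γ_f < γ_i). Then max_{t ∈ [0,τ]} √(L(γ(t), γ̇(t))) ≥ (1/τ) ∫_{γ_f}^{γ_i} √(M(s)/2) ds, and equality holds if the function t ↦ L(γ(t), γ̇(t)) is constant on [0,τ]. -/
/-- For a positive continuous mass function `M` and any C¹, strictly
monotonically decreasing curve `γ : [0, τ] → ℝ` with `γ 0 = γi`, `γ τ = γf < γi`, the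
maximum of `√(L(γ(t), γ̇(t)))` (with `L(γ, v) = (1/2) M(γ) v²`) over `[0, τ]` is at least
`(1/τ) ∫_{γf}^{γi} √(M(s)/2) ds`, with equality if `t ↦ L(γ(t), γ̇(t))` is constant. -/
theorem max_sqrt_lagrangian_ge_mean
    (τ γi γf : ℝ) (hτ : 0 < τ) (hfi : γf < γi)
    (M γ : ℝ → ℝ) (hMcont : Continuous M) (hMpos : ∀ x, 0 < M x)
    (hγ : ContDiff ℝ 1 γ)
    (hmono : StrictAntiOn γ (Set.Icc (0 : ℝ) τ))
    (h0 : γ 0 = γi) (hτf : γ τ = γf) :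
    (1 / τ) * ∫ s in γf..γi, Real.sqrt (M s / 2)
      ≤ sSup ((fun t => Real.sqrt ((1 / 2) * M (γ t) * (deriv γ t) ^ 2)) ''
          Set.Icc (0 : ℝ) τ)
    ∧ ((∃ c : ℝ, ∀ t ∈ Set.Icc (0 : ℝ) τ,
          (1 / 2) * M (γ t) * (deriv γ t) ^ 2 = c) →
        sSup ((fun t => Real.sqrt ((1 / 2) * M (γ t) * (deriv γ t) ^ 2)) ''
            Set.Icc (0 : ℝ) τ)
          = (1 / τ) * ∫ s in γf..γi, Real.sqrt (M s / 2)) := by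
  have hdiff : Differentiable ℝ γ := hγ.differentiable one_ne_zero
  have hderiv_cont : Continuous (deriv γ) := hγ.continuous_deriv le_rfl
  set f : ℝ → ℝ := fun t => Real.sqrt ((1 / 2) * M (γ t) * (deriv γ t) ^ 2) with hf
  have hfcont : Continuous f :=
    Real.continuous_sqrt.comp
      (((continuous_const.mul (hMcont.comp hγ.continuous)).mul (hderiv_cont.pow 2)))
  -- deriv nonpos on Ioo
  have hIoo : ∀ t ∈ Set.Ioo (0:ℝ) τ, deriv γ t ≤ 0 := by
    intro t ht
    have hd : HasDerivAt γ (deriv γ t) t := (hdiff t).hasDerivAt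
    have hslope := hasDerivAt_iff_tendsto_slope.mp hd
    have hgt : Filter.Tendsto (slope γ t) (nhdsWithin t (Set.Ioi t)) (nhds (deriv γ t)) :=
      hslope.mono_left (nhdsWithin_mono t (fun x hx => ne_of_gt hx))
    refine le_of_tendsto hgt ?_
    have hmem : Set.Ioo t τ ∈ nhdsWithin t (Set.Ioi t) :=
      Ioo_mem_nhdsGT_of_mem ⟨le_refl t, ht.2⟩
    filter_upwards [hmem] with x hx
    have hxI : x ∈ Set.Icc (0:ℝ) τ := ⟨le_of_lt (ht.1.trans hx.1), le_of_lt hx.2⟩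
    have htI : t ∈ Set.Icc (0:ℝ) τ := ⟨le_of_lt ht.1, le_of_lt (hx.1.trans hx.2)⟩
    have : γ x < γ t := hmono htI hxI hx.1
    rw [slope_def_field]
    exact div_nonpos_of_nonpos_of_nonneg (by linarith) (by linarith [hx.1])
  have hderiv_nonpos : ∀ t ∈ Set.Icc (0:ℝ) τ, deriv γ t ≤ 0 := by
    have hclosed : IsClosed {t : ℝ | deriv γ t ≤ 0} :=
      isClosed_le hderiv_cont continuous_const
    intro t ht
    have : Set.Icc (0:ℝ) τ ⊆ {t : ℝ | deriv γ t ≤ 0} := by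
      rw [← closure_Ioo hτ.ne]
      exact hclosed.closure_subset_iff.mpr hIoo
    exact this ht
  -- f t = -(deriv γ t) * sqrt (M (γ t) / 2) on Icc
  have hfeq : ∀ t ∈ Set.Icc (0:ℝ) τ, f t = -(deriv γ t) * Real.sqrt (M (γ t) / 2) := by
    intro t ht
    have h1 : (1/2) * M (γ t) * (deriv γ t)^2 = (M (γ t) / 2) * (deriv γ t)^2 := by ring
    rw [hf]
    simp only
    rw [h1, Real.sqrt_mul (div_nonneg (hMpos _).le (by norm_num)), Real.sqrt_sq_eq_abs,
      abs_of_nonpos (hderiv_nonpos t ht)]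
    ring
  -- substitution
  have hsub : ∫ t in (0:ℝ)..τ, deriv γ t * Real.sqrt (M (γ t) / 2)
      = ∫ s in γi..γf, Real.sqrt (M s / 2) := by
    rw [← h0, ← hτf]
    exact intervalIntegral.integral_comp_smul_deriv
      (fun t _ => (hdiff t).hasDerivAt) hderiv_cont.continuousOn
      (Real.continuous_sqrt.comp (hMcont.div_const 2))
  have hint : ∫ t in (0:ℝ)..τ, f t = ∫ s in γf..γi, Real.sqrt (M s / 2) := by
    have : ∫ t in (0:ℝ)..τ, f t = ∫ t in (0:ℝ)..τ, -(deriv γ t * Real.sqrt (M (γ t) / 2)) := by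
      apply intervalIntegral.integral_congr
      intro t ht
      rw [Set.uIcc_of_le hτ.le] at ht
      rw [hfeq t ht]; ring
    rw [this, intervalIntegral.integral_neg, hsub, ← intervalIntegral.integral_symm]
  set S := sSup (f '' Set.Icc (0:ℝ) τ) with hS
  have hbdd : BddAbove (f '' Set.Icc (0:ℝ) τ) :=
    (isCompact_Icc.image hfcont).bddAbove
  have hle : ∀ t ∈ Set.Icc (0:ℝ) τ, f t ≤ S :=
    fun t ht => le_csSup hbdd ⟨t, ht, rfl⟩
  have hintle : ∫ t in (0:ℝ)..τ, f t ≤ τ * S := by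
    have := intervalIntegral.integral_mono_on hτ.le
      (hfcont.intervalIntegrable 0 τ) (intervalIntegrable_const (μ := MeasureTheory.volume) (c := S)) hle
    simpa using this.trans_eq (by simp)
  constructor
  · rw [← hint]
    have h2 : (1/τ) * ∫ t in (0:ℝ)..τ, f t ≤ (1/τ) * (τ * S) :=
      mul_le_mul_of_nonneg_left hintle (by positivity)
    calc (1/τ) * ∫ t in (0:ℝ)..τ, f t ≤ (1/τ) * (τ * S) := h2
      _ = S := by field_simp
  · rintro ⟨c, hc⟩
    have hc0 : 0 ≤ c := by
      have := hc 0 ⟨le_refl 0, hτ.le⟩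
      rw [← this]
      exact mul_nonneg (mul_nonneg (by norm_num) (hMpos _).le) (sq_nonneg _)
    have hfc : ∀ t ∈ Set.Icc (0:ℝ) τ, f t = Real.sqrt c := by
      intro t ht; rw [hf]; simp only; rw [hc t ht]
    have himg : f '' Set.Icc (0:ℝ) τ = {Real.sqrt c} := by
      apply Set.Subset.antisymm
      · rintro x ⟨t, ht, rfl⟩
        exact hfc t ht
      · rintro x hx
        rw [Set.mem_singleton_iff] at hx
        exact ⟨0, ⟨le_refl 0, hτ.le⟩, by rw [hfc 0 ⟨le_refl 0, hτ.le⟩, hx]⟩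
    have hintc : ∫ t in (0:ℝ)..τ, f t = τ * Real.sqrt c := by
      rw [intervalIntegral.integral_congr (g := fun _ => Real.sqrt c)
        (fun t ht => by rw [Set.uIcc_of_le hτ.le] at ht; exact hfc t ht)]
      simp
    rw [hS, himg, csSup_singleton, ← hint, hintc]
    field_simp
end

section
/- Let M : ℝ → ℝ be positive and continuously differentiable, and let γ₀ : [0,τ] → ℝ be a C², strictly monotonically decreasing solution of the Euler–Lagrange equation M(γ₀) γ̈₀ + (1/2) M'(γ₀) γ̇₀² = 0 with γ₀(0) = γ_i and γ₀(τ) = γ_f. Then γ₀ minimizes the error measure E_∞[γ] = max_{t ∈ [0,τ]} L(γ(t), γ̇(t)) among all C¹, strictly monotonically decreasing curves γ : [0,τ] → ℝ with γ(0) = γ_i and γ(τ) = γ_f; that is, max_t L(γ₀(t), γ̇₀(t)) ≤ max_t L(γ(t), γ̇(t)) for every such curve γ. -/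
open Set Filter Topology intervalIntegral

lemma aux_deriv_nonpos_of_strictAntiOn {τ : ℝ} (hτ : 0 < τ) {γ : ℝ → ℝ}
    (hγ : Differentiable ℝ γ) (hmono : StrictAntiOn γ (Set.Icc 0 τ))
    {t : ℝ} (ht : t ∈ Set.Icc 0 τ) : deriv γ t ≤ 0 := by
  have hd : Tendsto (slope γ t) (𝓝[≠] t) (𝓝 (deriv γ t)) :=
    hasDerivAt_iff_tendsto_slope.mp (hγ t).hasDerivAt
  rcases lt_or_eq_of_le ht.2 with h | h
  · have h1 : Tendsto (slope γ t) (𝓝[>] t) (𝓝 (deriv γ t)) :=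
      hd.mono_left (nhdsWithin_mono _ fun y hy => hy.ne')
    refine le_of_tendsto h1 ?_
    filter_upwards [Ioo_mem_nhdsGT_of_mem ⟨le_rfl, h⟩] with y hy
    have hlt : γ y < γ t := hmono ht ⟨le_trans ht.1 hy.1.le, hy.2.le⟩ hy.1
    rw [slope_def_field]
    exact div_nonpos_of_nonpos_of_nonneg (by linarith) (by linarith [hy.1])
  · have h0 : (0:ℝ) < t := h ▸ hτ
    have h1 : Tendsto (slope γ t) (𝓝[<] t) (𝓝 (deriv γ t)) :=
      hd.mono_left (nhdsWithin_mono _ fun y hy => hy.ne)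
    refine le_of_tendsto h1 ?_
    filter_upwards [Ioo_mem_nhdsLT_of_mem ⟨h0, le_rfl⟩] with y hy
    have hlt : γ t < γ y := hmono ⟨hy.1.le, le_trans hy.2.le ht.2⟩ ht hy.2
    rw [slope_def_field]
    exact div_nonpos_of_nonneg_of_nonpos (by linarith) (by linarith [hy.2])

lemma aux_cov {τ : ℝ} {γ M : ℝ → ℝ} (hγd : Differentiable ℝ γ)
    (hγ' : Continuous (deriv γ)) (hM : Continuous M) :
    ∫ t in (0:ℝ)..τ, deriv γ t * Real.sqrt (M (γ t))
      = ∫ u in (γ 0)..(γ τ), Real.sqrt (M u) := by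
  have := intervalIntegral.integral_comp_smul_deriv (a := (0:ℝ)) (b := τ)
    (f := γ) (f' := deriv γ) (g := fun u => Real.sqrt (M u))
    (fun x _ => (hγd x).hasDerivAt) hγ'.continuousOn (Real.continuous_sqrt.comp hM)
  simpa [smul_eq_mul, Function.comp] using this

/-- For a positive C¹ mass function `M`, a C², strictly monotonically
decreasing solution `γ₀ : [0, τ] → ℝ` of the Euler–Lagrange equation
`M(γ₀) γ̈₀ + (1/2) M'(γ₀) γ̇₀² = 0` with `γ₀ 0 = γi`, `γ₀ τ = γf` minimizes the error
measure `E_∞[γ] = max_{t ∈ [0,τ]} (1/2) M(γ(t)) γ̇(t)²` among all C¹, strictly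
monotonically decreasing curves with the same endpoints. -/
theorem eulerLagrange_solution_minimizes_Einfty
    (τ γi γf : ℝ) (hτ : 0 < τ) (hfi : γf < γi)
    (M : ℝ → ℝ) (hM : ContDiff ℝ 1 M) (hMpos : ∀ x, 0 < M x)
    (γ₀ : ℝ → ℝ) (hγ₀ : ContDiff ℝ 2 γ₀)
    (hmono₀ : StrictAntiOn γ₀ (Set.Icc (0 : ℝ) τ))
    (h00 : γ₀ 0 = γi) (h0τ : γ₀ τ = γf)
    (hEL : ∀ t ∈ Set.Icc (0 : ℝ) τ,
      M (γ₀ t) * deriv (deriv γ₀) t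
        + (1 / 2) * deriv M (γ₀ t) * (deriv γ₀ t) ^ 2 = 0)
    (γ : ℝ → ℝ) (hγ : ContDiff ℝ 1 γ)
    (hmono : StrictAntiOn γ (Set.Icc (0 : ℝ) τ))
    (hg0 : γ 0 = γi) (hgτ : γ τ = γf) :
    sSup ((fun t => (1 / 2) * M (γ₀ t) * (deriv γ₀ t) ^ 2) '' Set.Icc (0 : ℝ) τ)
      ≤ sSup ((fun t => (1 / 2) * M (γ t) * (deriv γ t) ^ 2) '' Set.Icc (0 : ℝ) τ) := by
  have hMc : Continuous M := hM.continuous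
  have hMd : Differentiable ℝ M := hM.differentiable one_ne_zero
  have hγ₀d : Differentiable ℝ γ₀ := hγ₀.differentiable (by norm_num)
  have hγd : Differentiable ℝ γ := hγ.differentiable one_ne_zero
  have h2 : ContDiff ℝ ((1:WithTop ℕ∞)+1) γ₀ := by norm_num; exact hγ₀
  have hdc : ContDiff ℝ 1 (deriv γ₀) := (contDiff_succ_iff_deriv.mp h2).2.2
  have hdγ₀c : Continuous (deriv γ₀) := hdc.continuous
  have hdγc : Continuous (deriv γ) := hγ.continuous_deriv le_rfl
  set F : ℝ → ℝ := fun t => (1 / 2) * M (γ₀ t) * (deriv γ₀ t) ^ 2 with hF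
  set G : ℝ → ℝ := fun t => (1 / 2) * M (γ t) * (deriv γ t) ^ 2 with hG
  have hFc : Continuous F :=
    (continuous_const.mul (hMc.comp hγ₀d.continuous)).mul (hdγ₀c.pow 2)
  have hGc : Continuous G :=
    (continuous_const.mul (hMc.comp hγd.continuous)).mul (hdγc.pow 2)
  -- F is constant on [0, τ]
  have hkey : ∀ t ∈ Set.Icc (0:ℝ) τ, HasDerivAt F 0 t := by
    intro t ht
    have h1 : HasDerivAt γ₀ (deriv γ₀ t) t := (hγ₀d t).hasDerivAt
    have hh2 : HasDerivAt (deriv γ₀) (deriv (deriv γ₀) t) t :=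
      ((hdc.differentiable one_ne_zero) t).hasDerivAt
    have hMd' : HasDerivAt M (deriv M (γ₀ t)) (γ₀ t) := (hMd (γ₀ t)).hasDerivAt
    have hcomp : HasDerivAt (fun s => M (γ₀ s)) (deriv M (γ₀ t) * deriv γ₀ t) t :=
      hMd'.comp t h1
    have hsq : HasDerivAt (fun s => (deriv γ₀ s) ^ 2)
        ((2:ℕ) * deriv γ₀ t ^ 1 * deriv (deriv γ₀) t) t := hh2.pow 2
    have hbig := ((hasDerivAt_const t ((1:ℝ)/2)).mul hcomp).mul hsq
    refine hbig.congr_deriv (Eq.symm ?_)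
    simp only [Pi.mul_apply]
    have e := hEL t ht
    push_cast
    linear_combination (-(deriv γ₀ t : ℝ)) * e
  have hconst : ∀ t ∈ Set.Icc (0:ℝ) τ, F t = F 0 :=
    constant_of_has_deriv_right_zero hFc.continuousOn
      (fun x hx => (hkey x (Set.Ico_subset_Icc_self hx)).hasDerivWithinAt)
  -- sSup of G
  have hne : (Set.Icc (0:ℝ) τ).Nonempty := Set.nonempty_Icc.mpr hτ.le
  have hbdd : BddAbove (G '' Set.Icc (0:ℝ) τ) :=
    (isCompact_Icc.image hGc).bddAbove
  set c : ℝ := sSup (G '' Set.Icc (0:ℝ) τ) with hc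
  have hGle : ∀ t ∈ Set.Icc (0:ℝ) τ, G t ≤ c :=
    fun t ht => le_csSup hbdd ⟨t, ht, rfl⟩
  have hG0 : (0:ℝ) ≤ G 0 := by
    have := (hMpos (γ 0)).le
    simp only [hG]
    positivity
  have hcnn : (0:ℝ) ≤ c := le_trans hG0 (hGle 0 (by constructor <;> [rfl; exact hτ.le]))
  have hF0nn : (0:ℝ) ≤ F 0 := by
    have := (hMpos (γ₀ 0)).le
    simp only [hF]
    positivity
  -- change of variables: both integrals equal
  have hcov : ∫ t in (0:ℝ)..τ, deriv γ₀ t * Real.sqrt (M (γ₀ t))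
      = ∫ t in (0:ℝ)..τ, deriv γ t * Real.sqrt (M (γ t)) := by
    rw [aux_cov hγ₀d hdγ₀c hMc, aux_cov hγd hdγc hMc, h00, h0τ, hg0, hgτ]
  -- pointwise equality for γ₀
  have hpt₀ : ∀ t ∈ Set.Icc (0:ℝ) τ,
      -(deriv γ₀ t * Real.sqrt (M (γ₀ t))) = Real.sqrt (2 * F 0) := by
    intro t ht
    have hd0 : deriv γ₀ t ≤ 0 := aux_deriv_nonpos_of_strictAntiOn hτ hγ₀d hmono₀ ht
    have h2F : 2 * F 0 = M (γ₀ t) * (deriv γ₀ t) ^ 2 := by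
      rw [← hconst t ht]; simp only [hF]; ring
    rw [h2F, show M (γ₀ t) * (deriv γ₀ t)^2 = (M (γ₀ t)) * (deriv γ₀ t)^2 from rfl,
      Real.sqrt_mul (hMpos (γ₀ t)).le, Real.sqrt_sq_eq_abs, abs_of_nonpos hd0]
    ring
  -- pointwise bound for γ
  have hpt : ∀ t ∈ Set.Icc (0:ℝ) τ,
      -(deriv γ t * Real.sqrt (M (γ t))) ≤ Real.sqrt (2 * c) := by
    intro t ht
    have h2G : 2 * G t = M (γ t) * (deriv γ t) ^ 2 := by simp only [hG]; ring
    have hle : -(deriv γ t * Real.sqrt (M (γ t))) ≤ Real.sqrt (2 * G t) := by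
      rw [h2G, Real.sqrt_mul (hMpos (γ t)).le, Real.sqrt_sq_eq_abs]
      calc -(deriv γ t * Real.sqrt (M (γ t)))
          = Real.sqrt (M (γ t)) * (-(deriv γ t)) := by ring
        _ ≤ Real.sqrt (M (γ t)) * |deriv γ t| := by
            exact mul_le_mul_of_nonneg_left (neg_le_abs _) (Real.sqrt_nonneg _)
    exact hle.trans (Real.sqrt_le_sqrt (by linarith [hGle t ht]))
  -- integrate
  have hint₀ : IntervalIntegrable (fun t => -(deriv γ₀ t * Real.sqrt (M (γ₀ t))))
      MeasureTheory.volume 0 τ :=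
    ((hdγ₀c.mul (Real.continuous_sqrt.comp (hMc.comp hγ₀d.continuous))).neg).intervalIntegrable 0 τ
  have hint : IntervalIntegrable (fun t => -(deriv γ t * Real.sqrt (M (γ t))))
      MeasureTheory.volume 0 τ :=
    ((hdγc.mul (Real.continuous_sqrt.comp (hMc.comp hγd.continuous))).neg).intervalIntegrable 0 τ
  have hI₀ : ∫ t in (0:ℝ)..τ, -(deriv γ₀ t * Real.sqrt (M (γ₀ t)))
      = τ * Real.sqrt (2 * F 0) := by
    rw [intervalIntegral.integral_congr (g := fun _ => Real.sqrt (2 * F 0))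
      (by intro x hx; exact hpt₀ x (by rwa [Set.uIcc_of_le hτ.le] at hx))]
    simp [smul_eq_mul, mul_comm, mul_left_comm, mul_assoc]
  have hIle : ∫ t in (0:ℝ)..τ, -(deriv γ t * Real.sqrt (M (γ t)))
      ≤ τ * Real.sqrt (2 * c) := by
    have := intervalIntegral.integral_mono_on hτ.le hint
      (intervalIntegrable_const) (fun x hx => hpt x hx)
    simpa [smul_eq_mul, mul_comm, mul_left_comm, mul_assoc] using this
  have hIeq : ∫ t in (0:ℝ)..τ, -(deriv γ₀ t * Real.sqrt (M (γ₀ t)))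
      = ∫ t in (0:ℝ)..τ, -(deriv γ t * Real.sqrt (M (γ t))) := by
    rw [intervalIntegral.integral_neg, intervalIntegral.integral_neg, hcov]
  have hmain : τ * Real.sqrt (2 * F 0) ≤ τ * Real.sqrt (2 * c) := by
    rw [← hI₀, hIeq]; exact hIle
  have hsqrt : Real.sqrt (2 * F 0) ≤ Real.sqrt (2 * c) :=
    le_of_mul_le_mul_left (by linarith) hτ
  have hF0c : F 0 ≤ c := by
    have h1 : 2 * F 0 ≤ 2 * c := by
      have := mul_self_le_mul_self (Real.sqrt_nonneg _) hsqrt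
      rwa [Real.mul_self_sqrt (by linarith), Real.mul_self_sqrt (by linarith)] at this
    linarith
  refine csSup_le (hne.image _) ?_
  rintro y ⟨t, ht, rfl⟩
  calc (1/2) * M (γ₀ t) * (deriv γ₀ t) ^ 2 = F t := rfl
    _ = F 0 := hconst t ht
    _ ≤ c := hF0c
end

section
/- Let M : ℝ → ℝ be positive and continuously differentiable, and let γ : [0,τ] → ℝ be a C², strictly monotonically decreasing solution of the Euler–Lagrange equation M(γ) γ̈ + (1/2) M'(γ) γ̇² = 0. Set H₀ = (1/2) M(γ(0)) γ̇(0)². Then for every t ∈ [0,τ], ∫_{γ(t)}^{γ(0)} √(M(s)) ds = √(2 H₀) · t. -/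
/-- For a positive C¹ mass function `M` and a C², strictly
monotonically decreasing solution `γ : [0, τ] → ℝ` of the Euler–Lagrange equation
`M(γ) γ̈ + (1/2) M'(γ) γ̇² = 0`, with `H₀ = (1/2) M(γ(0)) γ̇(0)²`, one has the
complete integral `∫_{γ(t)}^{γ(0)} √(M(s)) ds = √(2 H₀) · t` for every `t ∈ [0, τ]`. -/
theorem eulerLagrange_complete_integral
    (τ : ℝ) (hτ : 0 < τ)
    (M γ : ℝ → ℝ) (hM : ContDiff ℝ 1 M) (hMpos : ∀ x, 0 < M x)
    (hγ : ContDiff ℝ 2 γ)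
    (hmono : StrictAntiOn γ (Set.Icc (0 : ℝ) τ))
    (hEL : ∀ t ∈ Set.Icc (0 : ℝ) τ,
      M (γ t) * deriv (deriv γ) t
        + (1 / 2) * deriv M (γ t) * (deriv γ t) ^ 2 = 0) :
    ∀ t ∈ Set.Icc (0 : ℝ) τ,
      ∫ s in (γ t)..(γ 0), Real.sqrt (M s)
        = Real.sqrt (2 * ((1 / 2) * M (γ 0) * (deriv γ 0) ^ 2)) * t := by
  set C := M (γ 0) * (deriv γ 0) ^ 2 with hCdef
  have hγd : Differentiable ℝ γ := hγ.differentiable (by norm_num)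
  have h2 : ContDiff ℝ (1 + 1) γ := by exact_mod_cast hγ
  have hdγ : ContDiff ℝ 1 (deriv γ) := (contDiff_succ_iff_deriv.mp h2).2.2
  have hdγd : Differentiable ℝ (deriv γ) := hdγ.differentiable one_ne_zero
  have hMd : Differentiable ℝ M := hM.differentiable one_ne_zero
  -- energy conservation
  have hE : ∀ t ∈ Set.Icc (0 : ℝ) τ, M (γ t) * (deriv γ t) ^ 2 = C := by
    have hcont : ContinuousOn (fun t => M (γ t) * deriv γ t ^ 2) (Set.Icc 0 τ) :=
      ((hM.continuous.comp hγ.continuous).mul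
        ((hγ.continuous_deriv one_le_two).pow 2)).continuousOn
    have hder : ∀ x ∈ Set.Ico (0 : ℝ) τ,
        HasDerivWithinAt (fun t => M (γ t) * deriv γ t ^ 2) 0 (Set.Ici x) x := by
      intro x hx
      have h1 : HasDerivAt γ (deriv γ x) x := (hγd x).hasDerivAt
      have h3 : HasDerivAt M (deriv M (γ x)) (γ x) := (hMd (γ x)).hasDerivAt
      have h4 : HasDerivAt (fun t => M (γ t)) (deriv M (γ x) * deriv γ x) x := h3.comp x h1
      have h5 : HasDerivAt (fun t => deriv γ t ^ 2)
          (2 * deriv γ x * deriv (deriv γ) x) x := by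
        simpa using ((hdγd x).hasDerivAt).fun_pow 2
      have h6 := (h4.mul h5).hasDerivWithinAt (s := Set.Ici x)
      have heq : deriv M (γ x) * deriv γ x * deriv γ x ^ 2
          + M (γ x) * (2 * deriv γ x * deriv (deriv γ) x) = 0 := by
        have h := hEL x ⟨hx.1, hx.2.le⟩
        linear_combination 2 * deriv γ x * h
      rwa [heq] at h6
    intro t ht
    exact constant_of_has_deriv_right_zero hcont hder t ht
  -- C > 0
  have hCpos : 0 < C := by
    rcases lt_or_eq_of_le (mul_nonneg (hMpos (γ 0)).le (sq_nonneg _)) with h | h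
    · exact h
    · exfalso
      have hz : ∀ t ∈ Set.Icc (0 : ℝ) τ, deriv γ t = 0 := by
        intro t ht
        have h0 : M (γ t) * deriv γ t ^ 2 = 0 := by rw [hE t ht, hCdef, ← h]
        have h1 := (mul_eq_zero.mp h0).resolve_left (hMpos (γ t)).ne'
        exact pow_eq_zero_iff two_ne_zero |>.mp h1
      have hconst : γ τ = γ 0 := by
        refine constant_of_has_deriv_right_zero hγ.continuous.continuousOn
          (fun x hx => ?_) τ (Set.right_mem_Icc.mpr hτ.le)
        have := (hγd x).hasDerivAt
        rw [hz x ⟨hx.1, hx.2.le⟩] at this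
        exact this.hasDerivWithinAt
      have := hmono (Set.left_mem_Icc.mpr hτ.le) (Set.right_mem_Icc.mpr hτ.le) hτ
      linarith
  -- deriv γ never zero on [0,τ]
  have hne : ∀ t ∈ Set.Icc (0 : ℝ) τ, deriv γ t ≠ 0 := by
    intro t ht h
    rw [← hE t ht, h] at hCpos
    simp at hCpos
  -- deriv γ < 0 on [0,τ]
  have hneg : ∀ t ∈ Set.Icc (0 : ℝ) τ, deriv γ t < 0 := by
    obtain ⟨c, hc, hslope⟩ := exists_deriv_eq_slope γ hτ hγ.continuous.continuousOn
      (fun x _ => (hγd x).differentiableWithinAt)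
    have hcI : c ∈ Set.Icc (0 : ℝ) τ := ⟨hc.1.le, hc.2.le⟩
    have hcneg : deriv γ c < 0 := by
      rw [hslope]
      have := hmono (Set.left_mem_Icc.mpr hτ.le) (Set.right_mem_Icc.mpr hτ.le) hτ
      apply div_neg_of_neg_of_pos <;> linarith
    intro t ht
    rcases lt_or_ge (deriv γ t) 0 with h | h
    · exact h
    · exfalso
      have hcont : ContinuousOn (deriv γ) (Set.uIcc c t) :=
        (hγ.continuous_deriv one_le_two).continuousOn
      have hsub : Set.uIcc c t ⊆ Set.Icc 0 τ := Set.ordConnected_Icc.uIcc_subset hcI ht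
      have h0 : (0 : ℝ) ∈ Set.uIcc (deriv γ c) (deriv γ t) :=
        Set.mem_uIcc.mpr (Or.inl ⟨hcneg.le, h⟩)
      obtain ⟨x, hx, hx0⟩ := intermediate_value_uIcc hcont h0
      exact hne x (hsub hx) hx0
  -- key pointwise identity
  have hkey : ∀ t ∈ Set.Icc (0 : ℝ) τ,
      Real.sqrt (M (γ t)) * (-(deriv γ t)) = Real.sqrt C := by
    intro t ht
    have hd : (0:ℝ) ≤ -(deriv γ t) := by linarith [hneg t ht]
    have hsq2 : (Real.sqrt (M (γ t)) * -(deriv γ t)) ^ 2 = C := by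
      rw [mul_pow, Real.sq_sqrt (hMpos _).le, ← hE t ht]; ring
    rw [← Real.sqrt_sq (mul_nonneg (Real.sqrt_nonneg _) hd), hsq2]
  -- FTC setup
  have hsq : Continuous fun s => Real.sqrt (M s) := Real.continuous_sqrt.comp hM.continuous
  set Φ : ℝ → ℝ := fun u => ∫ s in (γ 0)..u, Real.sqrt (M s) with hΦdef
  have hΦ : ∀ x : ℝ, HasDerivAt Φ (Real.sqrt (M x)) x := by
    intro x
    exact intervalIntegral.integral_hasDerivAt_right (hsq.intervalIntegrable _ _)
      (hsq.stronglyMeasurableAtFilter _ _) hsq.continuousAt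
  have hΦdiff : Differentiable ℝ Φ := fun x => (hΦ x).differentiableAt
  have hΦcont : Continuous Φ := hΦdiff.continuous
  -- g t = √C * t + Φ (γ t) is constant on [0,τ]
  set g : ℝ → ℝ := fun t => Real.sqrt C * t + Φ (γ t) with hgdef
  have hgconst : ∀ t ∈ Set.Icc (0 : ℝ) τ, g t = g 0 := by
    refine constant_of_has_deriv_right_zero
      ((continuous_const.mul continuous_id).add (hΦcont.comp hγ.continuous)).continuousOn
      (fun x hx => ?_)
    have h1 : HasDerivAt (fun t => Real.sqrt C * t) (Real.sqrt C) x := by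
      simpa using (hasDerivAt_id x).const_mul (Real.sqrt C)
    have h2 : HasDerivAt (fun t => Φ (γ t)) (Real.sqrt (M (γ x)) * deriv γ x) x :=
      (hΦ (γ x)).comp x (hγd x).hasDerivAt
    have h3 := (h1.add h2).hasDerivWithinAt (s := Set.Ici x)
    have heq : Real.sqrt C + Real.sqrt (M (γ x)) * deriv γ x = 0 := by
      have := hkey x ⟨hx.1, hx.2.le⟩
      linarith [this]
    rwa [heq] at h3
  intro t ht
  have hg0 : g 0 = 0 := by
    simp [hgdef, hΦdef, intervalIntegral.integral_same]
  have := hgconst t ht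
  rw [hg0] at this
  have hΦt : Φ (γ t) = -(Real.sqrt C * t) := by
    simp only [hgdef] at this; linarith
  have hsym : (∫ s in (γ t)..(γ 0), Real.sqrt (M s)) = -Φ (γ t) :=
    (intervalIntegral.integral_symm _ _).trans rfl
  rw [hsym, hΦt, neg_neg,
    show 2 * ((1 / 2) * M (γ 0) * (deriv γ 0) ^ 2) = C by rw [hCdef]; ring]
end

section
/- Fix c > 0, τ > 0 and 0 < Ω_τ < Ω₀. Define the hyperbolic ramp γ : [0,τ] → ℝ by γ(t) = (Ω₀⁻¹ + (Ω_τ⁻¹ − Ω₀⁻¹) t/τ)⁻¹, and let M(γ) = c γ⁻⁴. Then γ is C², strictly monotonically decreasing, γ(0) = Ω₀, γ(τ) = Ω_τ, γ satisfies the Euler–Lagrange equation M(γ) γ̈ + (1/2) M'(γ) γ̇² = 0, and the Lagrangian is constant along the curve: (1/2) M(γ(t)) γ̇(t)² = (c / (2τ²)) (Ω_τ⁻¹ − Ω₀⁻¹)² for all t ∈ [0,τ]. -/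
private lemma EL_aux (c b u : ℝ) (hu : u ≠ 0) (hc : c ≠ 0) :
    c * ((u⁻¹) ^ 4)⁻¹ * (2 * b ^ 2 / u ^ 3)
      + 1 / 2 * (c * (-(4 * (u⁻¹) ^ 3) / ((u⁻¹) ^ 4) ^ 2)) * (-b / u ^ 2) ^ 2 = 0 := by
  field_simp
  ring

private lemma Lag_aux (c K τ b u : ℝ) (hu : u ≠ 0) (hτ : τ ≠ 0) (hb : b = K / τ) :
    1 / 2 * (c * ((u⁻¹) ^ 4)⁻¹) * (-b / u ^ 2) ^ 2
      = c / (2 * τ ^ 2) * K ^ 2 := by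
  subst hb
  field_simp

/-- For `c > 0`, `τ > 0`, `0 < Ωτ < Ω₀`, the hyperbolic ramp
`γ(t) = (Ω₀⁻¹ + (Ωτ⁻¹ − Ω₀⁻¹) t/τ)⁻¹` with atomic-limit mass function `M(γ) = c γ⁻⁴`
is C² on `[0, τ]`, strictly monotonically decreasing, has `γ(0) = Ω₀`, `γ(τ) = Ωτ`,
satisfies the Euler–Lagrange equation `M(γ) γ̈ + (1/2) M' (γ) γ̇² = 0`, and the
Lagrangian is constant along it:
`(1/2) M(γ(t)) γ̇(t)² = (c/(2τ²)) (Ωτ⁻¹ − Ω₀⁻¹)²` for all `t ∈ [0, τ]`. -/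
theorem hyperbolic_ramp_solves_eulerLagrange
    (c τ Ω₀ Ωτ : ℝ) (hc : 0 < c) (hτ : 0 < τ) (hΩτ : 0 < Ωτ) (hΩ : Ωτ < Ω₀)
    (γ M : ℝ → ℝ)
    (hγdef : γ = fun t => (Ω₀⁻¹ + (Ωτ⁻¹ - Ω₀⁻¹) * (t / τ))⁻¹)
    (hMdef : M = fun x => c * (x ^ 4)⁻¹) :
    ContDiffOn ℝ 2 γ (Set.Icc (0 : ℝ) τ)
    ∧ StrictAntiOn γ (Set.Icc (0 : ℝ) τ)
    ∧ γ 0 = Ω₀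
    ∧ γ τ = Ωτ
    ∧ (∀ t ∈ Set.Icc (0 : ℝ) τ,
        M (γ t) * deriv (deriv γ) t
          + (1 / 2) * deriv M (γ t) * (deriv γ t) ^ 2 = 0)
    ∧ (∀ t ∈ Set.Icc (0 : ℝ) τ,
        (1 / 2) * M (γ t) * (deriv γ t) ^ 2
          = (c / (2 * τ ^ 2)) * (Ωτ⁻¹ - Ω₀⁻¹) ^ 2) := by
  have hΩ₀ : (0:ℝ) < Ω₀ := hΩτ.trans hΩ
  set a : ℝ := Ω₀⁻¹ with ha_def
  set K : ℝ := Ωτ⁻¹ - Ω₀⁻¹ with hK_def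
  have ha : 0 < a := by positivity
  have hK : 0 < K := sub_pos.2 (by gcongr)
  set b : ℝ := K / τ with hb_def
  have hb : 0 < b := by positivity
  have hγ : γ = fun t => (a + b * t)⁻¹ := by
    rw [hγdef]; funext t; congr 1; rw [hb_def]; ring
  -- the open set where the denominator is positive
  set S : Set ℝ := Set.Ioi (-(a / b)) with hS_def
  have hSopen : IsOpen S := isOpen_Ioi
  have hIccS : Set.Icc (0:ℝ) τ ⊆ S := by
    intro t ht
    have h1 : 0 < a / b := by positivity
    have : -(a / b) < 0 := by linarith
    exact lt_of_lt_of_le this ht.1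
  have hu : ∀ s ∈ S, 0 < a + b * s := by
    intro s hs
    have hs' : -a / b < s := by rw [neg_div]; exact hs
    have := (div_lt_iff₀ hb).mp hs'
    linarith
  have hd1 : ∀ s ∈ S, HasDerivAt γ (-b / (a + b * s) ^ 2) s := by
    intro s hs
    have h : HasDerivAt (fun s : ℝ => a + b * s) b s := by
      simpa using ((hasDerivAt_id s).const_mul b).const_add a
    rw [hγ]; exact h.inv (ne_of_gt (hu s hs))
  have hderivγ : ∀ s ∈ S, deriv γ s = -b / (a + b * s) ^ 2 := fun s hs => (hd1 s hs).deriv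
  have hd2 : ∀ t ∈ S, deriv (deriv γ) t = 2 * b ^ 2 / (a + b * t) ^ 3 := by
    intro t ht
    have hev : deriv γ =ᶠ[nhds t] fun s => -b / (a + b * s) ^ 2 :=
      Filter.eventuallyEq_of_mem (hSopen.mem_nhds ht) hderivγ
    rw [hev.deriv_eq]
    have h : HasDerivAt (fun s : ℝ => a + b * s) b t := by
      simpa using ((hasDerivAt_id t).const_mul b).const_add a
    have hpow : HasDerivAt (fun s : ℝ => (a + b * s) ^ 2) (2 * (a + b * t) ^ 1 * b) t :=
      h.pow 2
    have hne : (a + b * t) ^ 2 ≠ 0 := pow_ne_zero _ (ne_of_gt (hu t ht))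
    have := (hpow.inv hne).const_mul (-b)
    have hd : HasDerivAt (fun s => -b * ((a + b * s) ^ 2)⁻¹)
        (-b * (-(2 * (a + b * t) ^ 1 * b) / ((a + b * t) ^ 2) ^ 2)) t := this
    have heq : (fun s : ℝ => -b * ((a + b * s) ^ 2)⁻¹) = fun s => -b / (a + b * s) ^ 2 := by
      funext s; rw [div_eq_mul_inv]
    rw [heq] at hd
    rw [hd.deriv]
    have h0 : (a + b * t) ≠ 0 := ne_of_gt (hu t ht)
    field_simp
  -- C²
  have hcd : ContDiffOn ℝ 2 γ (Set.Icc (0:ℝ) τ) := by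
    rw [hγ]
    apply ContDiffOn.mono _ hIccS
    apply ContDiffOn.inv
    · exact (contDiff_const.add (contDiff_const.mul contDiff_id)).contDiffOn
    · exact fun s hs => ne_of_gt (hu s hs)
  -- strictly decreasing
  have hanti : StrictAntiOn γ (Set.Icc (0:ℝ) τ) := by
    intro x hx y hy hxy
    rw [hγ]
    show (a + b * y)⁻¹ < (a + b * x)⁻¹
    have hx' : 0 < a + b * x := hu x (hIccS hx)
    have : a + b * x < a + b * y := by nlinarith
    gcongr
  -- endpoints
  have hγ0 : γ 0 = Ω₀ := by
    rw [hγ]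
    show (a + b * 0)⁻¹ = Ω₀
    rw [mul_zero, add_zero, ha_def, inv_inv]
  have hγτ : γ τ = Ωτ := by
    rw [hγ]
    show (a + b * τ)⁻¹ = Ωτ
    have h : a + b * τ = Ωτ⁻¹ := by
      rw [hb_def, hK_def, ha_def]; field_simp; ring
    rw [h, inv_inv]
  clear_value a K b
  refine ⟨hcd, hanti, hγ0, hγτ, ?_, ?_⟩
  · intro t ht
    have htS := hIccS ht
    have h0 : 0 < a + b * t := hu t htS
    have hγt : γ t = (a + b * t)⁻¹ := by rw [hγ]
    have hγtne : γ t ≠ 0 := by rw [hγt]; positivity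
    have hM' : deriv M (γ t) = c * (-(4 * (γ t) ^ 3) / ((γ t) ^ 4) ^ 2) := by
      have hpow : HasDerivAt (fun x : ℝ => x ^ 4) (4 * (γ t) ^ 3) (γ t) := by
        simpa using hasDerivAt_pow 4 (γ t)
      have hne : (γ t) ^ 4 ≠ 0 := pow_ne_zero _ hγtne
      have := (hpow.inv hne).const_mul c
      rw [hMdef]
      exact this.deriv
    rw [hM', hd2 t htS, hderivγ t htS, hγt]
    simp only [hMdef]
    exact EL_aux c b (a + b * t) (ne_of_gt h0) (ne_of_gt hc)
  · intro t ht
    have htS := hIccS ht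
    have h0 : 0 < a + b * t := hu t htS
    have hγt : γ t = (a + b * t)⁻¹ := by rw [hγ]
    rw [hderivγ t htS, hγt]
    simp only [hMdef]
    exact Lag_aux c K τ b (a + b * t) (ne_of_gt h0) (ne_of_gt hτ) hb_def
end

section
/- Fix c > 0, τ > 0 and 0 < Ω_τ < Ω₀, and let M(γ) = c γ⁻⁴. Then every C¹, strictly monotonically decreasing curve γ : [0,τ] → (0,∞) with γ(0) = Ω₀ and γ(τ) = Ω_τ satisfies max_{t ∈ [0,τ]} (1/2) M(γ(t)) γ̇(t)² ≥ (c / (2τ²)) (Ω_τ⁻¹ − Ω₀⁻¹)², and the hyperbolic ramp γ(t) = (Ω₀⁻¹ + (Ω_τ⁻¹ − Ω₀⁻¹) t/τ)⁻¹ achieves equality. In particular, the hyperbolic ramp minimizes the error measure E_∞ for the atomic-limit mass function. -/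
private lemma hyp_aux1 (c τ G A D : ℝ) (hG : G ≠ 0) (hτ : τ ≠ 0)
    (h : -A / G ^ 2 = D / τ) :
    1 / 2 * (c * (G ^ 4)⁻¹) * A ^ 2 = c / (2 * τ ^ 2) * D ^ 2 := by
  have h2 : A ^ 2 * τ ^ 2 = D ^ 2 * G ^ 4 := by
    field_simp at h
    linear_combination (D * G ^ 2 - A * τ) * h
  field_simp
  linear_combination c * h2

private lemma hyp_aux2 (c τ G D : ℝ) (hG : G ≠ 0) (hτ : τ ≠ 0) :
    1 / 2 * (c * ((G⁻¹) ^ 4)⁻¹) * (-(D * (1 / τ)) / G ^ 2) ^ 2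
      = c / (2 * τ ^ 2) * D ^ 2 := by
  field_simp

/-- For the atomic-limit mass function `M(γ) = c γ⁻⁴` (`c > 0`) and
`0 < Ωτ < Ω₀`, every C¹, strictly monotonically decreasing curve
`γ : [0, τ] → (0, ∞)` with `γ(0) = Ω₀`, `γ(τ) = Ωτ` satisfies
`max_{t ∈ [0,τ]} (1/2) M(γ(t)) γ̇(t)² ≥ (c/(2τ²)) (Ωτ⁻¹ − Ω₀⁻¹)²`, and the hyperbolic
ramp `γ(t) = (Ω₀⁻¹ + (Ωτ⁻¹ − Ω₀⁻¹) t/τ)⁻¹` achieves equality; it minimizes `E_∞`. -/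
theorem hyperbolic_ramp_minimizes_Einfty_atomic_limit
    (c τ Ω₀ Ωτ : ℝ) (hc : 0 < c) (hτ : 0 < τ) (hΩτ : 0 < Ωτ) (hΩ : Ωτ < Ω₀) :
    (∀ γ : ℝ → ℝ, ContDiff ℝ 1 γ → StrictAntiOn γ (Set.Icc (0 : ℝ) τ) →
      (∀ t ∈ Set.Icc (0 : ℝ) τ, 0 < γ t) → γ 0 = Ω₀ → γ τ = Ωτ →
      (c / (2 * τ ^ 2)) * (Ωτ⁻¹ - Ω₀⁻¹) ^ 2
        ≤ sSup ((fun t => (1 / 2) * (c * ((γ t) ^ 4)⁻¹) * (deriv γ t) ^ 2) ''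
            Set.Icc (0 : ℝ) τ))
    ∧ sSup ((fun t =>
          (1 / 2) * (c * (((fun s => (Ω₀⁻¹ + (Ωτ⁻¹ - Ω₀⁻¹) * (s / τ))⁻¹) t) ^ 4)⁻¹)
            * (deriv (fun s => (Ω₀⁻¹ + (Ωτ⁻¹ - Ω₀⁻¹) * (s / τ))⁻¹) t) ^ 2) ''
          Set.Icc (0 : ℝ) τ)
        = (c / (2 * τ ^ 2)) * (Ωτ⁻¹ - Ω₀⁻¹) ^ 2 := by
  have hΩ₀ : 0 < Ω₀ := hΩτ.trans hΩ
  constructor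
  · intro γ hγ _hanti hpos h0 hτv
    have hγc : Continuous γ := hγ.continuous
    have hdc : Continuous (deriv γ) := hγ.continuous_deriv le_rfl
    have hdiff : Differentiable ℝ γ := hγ.differentiable one_ne_zero
    have hcont : ContinuousOn
        (fun t => (1 / 2) * (c * ((γ t) ^ 4)⁻¹) * (deriv γ t) ^ 2)
        (Set.Icc (0 : ℝ) τ) := by
      apply ContinuousOn.mul
      · apply ContinuousOn.mul continuousOn_const
        apply ContinuousOn.mul continuousOn_const
        exact ((hγc.continuousOn.pow 4).inv₀
          fun t ht => pow_ne_zero _ (hpos t ht).ne')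
      · exact (hdc.continuousOn.pow 2)
    have hbdd : BddAbove
        ((fun t => (1 / 2) * (c * ((γ t) ^ 4)⁻¹) * (deriv γ t) ^ 2) ''
          Set.Icc (0 : ℝ) τ) :=
      (isCompact_Icc.image_of_continuousOn hcont).bddAbove
    have hfc : ContinuousOn (fun t => (γ t)⁻¹) (Set.Icc (0 : ℝ) τ) :=
      hγc.continuousOn.inv₀ fun t ht => (hpos t ht).ne'
    have hfd : DifferentiableOn ℝ (fun t => (γ t)⁻¹) (Set.Ioo (0 : ℝ) τ) := by
      intro x hx
      exact (((hdiff x).hasDerivAt.inv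
        (hpos x (Set.mem_Icc_of_Ioo hx)).ne').differentiableAt).differentiableWithinAt
    obtain ⟨x, hx, hder⟩ := exists_deriv_eq_slope (fun t => (γ t)⁻¹) hτ hfc hfd
    have hxIcc : x ∈ Set.Icc (0 : ℝ) τ := Set.mem_Icc_of_Ioo hx
    have hγx : γ x ≠ 0 := (hpos x hxIcc).ne'
    have hderf : deriv (fun t => (γ t)⁻¹) x = -(deriv γ x) / (γ x) ^ 2 :=
      ((hdiff x).hasDerivAt.inv hγx).deriv
    rw [hderf] at hder
    simp only [h0, hτv, sub_zero] at hder
    have hval : (1 / 2) * (c * ((γ x) ^ 4)⁻¹) * (deriv γ x) ^ 2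
        = (c / (2 * τ ^ 2)) * (Ωτ⁻¹ - Ω₀⁻¹) ^ 2 :=
      hyp_aux1 c τ (γ x) (deriv γ x) (Ωτ⁻¹ - Ω₀⁻¹) hγx hτ.ne' hder
    rw [← hval]
    exact le_csSup hbdd ⟨x, hxIcc, rfl⟩
  · set d : ℝ := Ωτ⁻¹ - Ω₀⁻¹ with hd
    have hkey : ∀ t ∈ Set.Icc (0 : ℝ) τ,
        (1 / 2) * (c * (((fun s => (Ω₀⁻¹ + d * (s / τ))⁻¹) t) ^ 4)⁻¹)
            * (deriv (fun s => (Ω₀⁻¹ + d * (s / τ))⁻¹) t) ^ 2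
          = (c / (2 * τ ^ 2)) * d ^ 2 := by
      intro t ht
      have hdpos : 0 < d := by
        have := one_div_lt_one_div_of_lt hΩτ hΩ
        simp only [one_div] at this
        simpa [hd] using sub_pos.mpr this
      have hg : 0 < Ω₀⁻¹ + d * (t / τ) := by
        have h1 : 0 ≤ t / τ := div_nonneg ht.1 hτ.le
        positivity
      have hgin : HasDerivAt (fun s => Ω₀⁻¹ + d * (s / τ)) (d * (1 / τ)) t := by
        simpa using (((hasDerivAt_id t).div_const τ).const_mul d).const_add Ω₀⁻¹
      have hder : HasDerivAt (fun s => (Ω₀⁻¹ + d * (s / τ))⁻¹)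
          (-(d * (1 / τ)) / (Ω₀⁻¹ + d * (t / τ)) ^ 2) t := hgin.inv hg.ne'
      rw [hder.deriv]
      exact hyp_aux2 c τ (Ω₀⁻¹ + d * (t / τ)) d hg.ne' hτ.ne'
    have himg : ((fun t =>
          (1 / 2) * (c * (((fun s => (Ω₀⁻¹ + d * (s / τ))⁻¹) t) ^ 4)⁻¹)
            * (deriv (fun s => (Ω₀⁻¹ + d * (s / τ))⁻¹) t) ^ 2) ''
          Set.Icc (0 : ℝ) τ) = {(c / (2 * τ ^ 2)) * d ^ 2} := by
      rw [Set.image_congr hkey]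
      exact Set.Nonempty.image_const ⟨0, Set.mem_Icc.mpr ⟨le_rfl, hτ.le⟩⟩ _
    rw [himg, csSup_singleton]
end

section
/- Fix a number of sites M_s > 0, τ > 0, and for each l ∈ {1,2,3} frequencies 0 < Ω_{lτ} < Ω_{l0}. Define the three-component hyperbolic ramp γ_l(t) = (Ω_{l0}⁻¹ + (Ω_{lτ}⁻¹ − Ω_{l0}⁻¹) t/τ)⁻¹ and the atomic-limit Lagrangian L_al(t) = Σ_{l=1}^{3} (1/2) M_s (2 γ_l(t))⁻⁴ γ̇_l(t)². Then L_al(t) is constant in t and equals (M_s / (32 τ²)) Σ_{l=1}^{3} (Ω_{lτ}⁻¹ − Ω_{l0}⁻¹)². In particular, for this ramp the cumulative adiabatic error in the atomic limit is E_∞^al = (M_s / (32 τ²)) Σ_l (Ω_{lτ}⁻¹ − Ω_{l0}⁻¹)², which is inversely proportional to the square of the ramp duration τ. -/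
lemma deriv_ramp (a b τ : ℝ) (hτ : 0 < τ) (t : ℝ) (hu : a + b * (t / τ) ≠ 0) :
    deriv (fun t => (a + b * (t / τ))⁻¹) t
      = -(b / τ) / (a + b * (t / τ)) ^ 2 := by
  have h1 : HasDerivAt (fun t : ℝ => a + b * (t / τ)) (b / τ) t := by
    have : HasDerivAt (fun t : ℝ => a + b * (t / τ)) (0 + b * (1 / τ)) t := by
      exact (hasDerivAt_const t a).add (((hasDerivAt_id t).div_const τ).const_mul b)
    simpa [mul_one_div, div_eq_mul_inv] using this
  have h2 := h1.inv hu
  exact h2.deriv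

/-- For `Ms > 0` sites, `τ > 0`, and frequencies `0 < Ωτ l < Ω₀ l`
for each of the three directions `l`, the three-component hyperbolic ramp
`γ l t = ((Ω₀ l)⁻¹ + ((Ωτ l)⁻¹ − (Ω₀ l)⁻¹) t/τ)⁻¹` renders the atomic-limit Lagrangian
`L_al(t) = Σ_l (1/2) Ms (2 γ l t)⁻⁴ (γ̇ l t)²` constant in `t`, equal to
`(Ms/(32 τ²)) Σ_l ((Ωτ l)⁻¹ − (Ω₀ l)⁻¹)²`; hence the cumulative adiabatic error
`E_∞^al = max_t L_al(t)` equals this value, inversely proportional to `τ²`. -/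
theorem atomic_limit_hyperbolic_ramp_error
    (Ms τ : ℝ) (hMs : 0 < Ms) (hτ : 0 < τ)
    (Ω₀ Ωτ : Fin 3 → ℝ) (hΩτ : ∀ l, 0 < Ωτ l) (hΩ : ∀ l, Ωτ l < Ω₀ l)
    (γ : Fin 3 → ℝ → ℝ)
    (hγdef : ∀ l, γ l = fun t => ((Ω₀ l)⁻¹ + ((Ωτ l)⁻¹ - (Ω₀ l)⁻¹) * (t / τ))⁻¹) :
    (∀ t ∈ Set.Icc (0 : ℝ) τ,
      ∑ l : Fin 3, (1 / 2) * Ms * ((2 * γ l t) ^ 4)⁻¹ * (deriv (γ l) t) ^ 2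
        = (Ms / (32 * τ ^ 2)) * ∑ l : Fin 3, ((Ωτ l)⁻¹ - (Ω₀ l)⁻¹) ^ 2)
    ∧ sSup ((fun t =>
          ∑ l : Fin 3, (1 / 2) * Ms * ((2 * γ l t) ^ 4)⁻¹ * (deriv (γ l) t) ^ 2) ''
          Set.Icc (0 : ℝ) τ)
        = (Ms / (32 * τ ^ 2)) * ∑ l : Fin 3, ((Ωτ l)⁻¹ - (Ω₀ l)⁻¹) ^ 2 := by
  have key : ∀ t ∈ Set.Icc (0 : ℝ) τ,
      ∑ l : Fin 3, (1 / 2) * Ms * ((2 * γ l t) ^ 4)⁻¹ * (deriv (γ l) t) ^ 2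
        = (Ms / (32 * τ ^ 2)) * ∑ l : Fin 3, ((Ωτ l)⁻¹ - (Ω₀ l)⁻¹) ^ 2 := by
    intro t ht
    rw [Finset.mul_sum]
    refine Finset.sum_congr rfl (fun l _ => ?_)
    set a := (Ω₀ l)⁻¹ with ha
    set b := (Ωτ l)⁻¹ - (Ω₀ l)⁻¹ with hb
    have hΩ0 : 0 < Ω₀ l := (hΩτ l).trans (hΩ l)
    have ha0 : 0 < a := inv_pos.2 hΩ0
    have hb0 : 0 < b := by
      have := (inv_strictAnti₀ (hΩτ l) (hΩ l))
      simpa [hb] using sub_pos.2 this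
    have hupos : 0 < a + b * (t / τ) := by
      have : 0 ≤ b * (t / τ) := mul_nonneg hb0.le (div_nonneg ht.1 hτ.le)
      linarith
    have hu : a + b * (t / τ) ≠ 0 := ne_of_gt hupos
    have hd : deriv (γ l) t = -(b / τ) / (a + b * (t / τ)) ^ 2 := by
      rw [hγdef l]; exact deriv_ramp a b τ hτ t hu
    have hγval : γ l t = (a + b * (t / τ))⁻¹ := by rw [hγdef l]
    rw [hd, hγval]
    set u := a + b * (t / τ) with hu_def
    have hune : u ≠ 0 := hu
    field_simp
    ring
  refine ⟨key, ?_⟩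
  have himg : (fun t =>
      ∑ l : Fin 3, (1 / 2) * Ms * ((2 * γ l t) ^ 4)⁻¹ * (deriv (γ l) t) ^ 2) ''
      Set.Icc (0 : ℝ) τ
      = {(Ms / (32 * τ ^ 2)) * ∑ l : Fin 3, ((Ωτ l)⁻¹ - (Ω₀ l)⁻¹) ^ 2} := by
    apply Set.eq_singleton_iff_nonempty_unique_mem.mpr
    constructor
    · exact ⟨_, ⟨0, ⟨le_refl 0, le_of_lt hτ⟩, key 0 ⟨le_refl 0, le_of_lt hτ⟩⟩⟩
    · rintro x ⟨t, ht, rfl⟩; exact key t ht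
  rw [himg, csSup_singleton]
end

section
/- Fix constants C > 0, b > 0, c > 0 and t₀ ∈ ℝ, and define M(γ) = (C/γ) exp(−b √γ) for γ > 0. Let γ(t) = (4/b²) (ln(c (t − t₀)))² on any interval of t with 0 < c (t − t₀) < 1. Then M(γ(t)) γ̇(t)² = 16 C c² / b² is constant in t; consequently γ satisfies the Euler–Lagrange equation M(γ) γ̈ + (1/2) M'(γ) γ̇² = 0 on that interval, so the optimal adiabatic ramp for a mass function of the form (C/γ) e^{−b√γ} is a squared-logarithm ramp. -/
/-- For `C, b, c > 0`, `t₀ ∈ ℝ`, the mass function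
`M(γ) = (C/γ) exp(−b √γ)` and the squared-logarithm ramp
`γ(t) = (4/b²) (ln(c (t − t₀)))²` on any interval with `0 < c (t − t₀) < 1`:
`M(γ(t)) γ̇(t)² = 16 C c²/b²` is constant in `t`, and consequently `γ` satisfies the
Euler–Lagrange equation `M(γ) γ̈ + (1/2) M'(γ) γ̇² = 0` there:  the optimal adiabatic
ramp for such a mass function is a squared-logarithm ramp. -/
theorem squared_log_ramp_optimal
    (C b c t₀ : ℝ) (hC : 0 < C) (hb : 0 < b) (hc : 0 < c)
    (M γ : ℝ → ℝ)
    (hMdef : M = fun x => (C / x) * Real.exp (-b * Real.sqrt x))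
    (hγdef : γ = fun t => (4 / b ^ 2) * (Real.log (c * (t - t₀))) ^ 2) :
    ∀ t : ℝ, 0 < c * (t - t₀) → c * (t - t₀) < 1 →
      M (γ t) * (deriv γ t) ^ 2 = 16 * C * c ^ 2 / b ^ 2
      ∧ M (γ t) * deriv (deriv γ) t
          + (1 / 2) * deriv M (γ t) * (deriv γ t) ^ 2 = 0 := by
  intro t hu0 hu1
  have hbne : b ≠ 0 := hb.ne'
  have hcne : c ≠ 0 := hc.ne'
  have hune : c * (t - t₀) ≠ 0 := ne_of_gt hu0
  have hs : 0 < t - t₀ := by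
    by_contra h
    push_neg at h
    nlinarith
  have hsne : t - t₀ ≠ 0 := hs.ne'
  set L : ℝ := Real.log (c * (t - t₀)) with hL
  have hLneg : L < 0 := Real.log_neg hu0 hu1
  have hLne : L ≠ 0 := hLneg.ne
  -- first derivative of γ, valid whenever c*(s-t₀) ≠ 0
  set g : ℝ → ℝ := fun s => 8 / b ^ 2 * (Real.log (c * (s - t₀)) * (s - t₀)⁻¹) with hg
  have key : ∀ s : ℝ, c * (s - t₀) ≠ 0 → HasDerivAt γ (g s) s := by
    intro s hsne'
    have hs0 : s - t₀ ≠ 0 := by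
      intro h; apply hsne'; rw [h, mul_zero]
    have h1 : HasDerivAt (fun s : ℝ => c * (s - t₀)) c s := by
      simpa using ((hasDerivAt_id s).sub_const t₀).const_mul c
    have hlog : HasDerivAt (fun s : ℝ => Real.log (c * (s - t₀)))
        ((c * (s - t₀))⁻¹ * c) s := by
      have := (Real.hasDerivAt_log hsne').comp s h1; exact this
    have h2 : HasDerivAt γ
        (4 / b ^ 2 * (2 * Real.log (c * (s - t₀)) ^ 1 * ((c * (s - t₀))⁻¹ * c))) s := by
      rw [hγdef]
      exact (hlog.pow 2).const_mul (4 / b ^ 2)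
    convert h2 using 1
    simp only [hg]
    field_simp
    ring
  have hd1 : deriv γ t = g t := (key t hune).deriv
  -- second derivative
  have hev : deriv γ =ᶠ[nhds t] g := by
    have hcont : ContinuousAt (fun s : ℝ => c * (s - t₀)) t := by fun_prop
    filter_upwards [hcont.eventually_ne hune] with s hs'
    exact (key s hs').deriv
  have h1 : HasDerivAt (fun s : ℝ => c * (s - t₀)) c t := by
    simpa using ((hasDerivAt_id t).sub_const t₀).const_mul c
  have hlog : HasDerivAt (fun s : ℝ => Real.log (c * (s - t₀)))
      ((c * (t - t₀))⁻¹ * c) t := by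
    have := (Real.hasDerivAt_log hune).comp t h1; exact this
  have hinv : HasDerivAt (fun s : ℝ => (s - t₀)⁻¹) (-1 / (t - t₀) ^ 2) t := by
    have this : HasDerivAt (fun s : ℝ => (s - t₀)⁻¹) (-((t - t₀) ^ 2)⁻¹ * 1) t :=
      (hasDerivAt_inv hsne).comp t ((hasDerivAt_id t).sub_const t₀)
    convert this using 1
    ring
  have hg' : HasDerivAt g
      (8 / b ^ 2 * ((c * (t - t₀))⁻¹ * c * (t - t₀)⁻¹ + L * (-1 / (t - t₀) ^ 2))) t :=
    (hlog.mul hinv).const_mul (8 / b ^ 2)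
  have hd2 : deriv (deriv γ) t
      = 8 / b ^ 2 * ((c * (t - t₀))⁻¹ * c * (t - t₀)⁻¹ + L * (-1 / (t - t₀) ^ 2)) := by
    rw [hev.deriv_eq]
    exact hg'.deriv
  -- value of γ t and its square root / exponential
  have hγt : γ t = 4 / b ^ 2 * L ^ 2 := by rw [hγdef]
  have hγpos : 0 < γ t := by
    rw [hγt]; exact mul_pos (by positivity) (pow_two_pos_of_ne_zero hLne)
  have hS : Real.sqrt (γ t) = 2 * (-L) / b := by
    have : γ t = (2 * (-L) / b) ^ 2 := by rw [hγt]; field_simp; ring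
    rw [this, Real.sqrt_sq (div_nonneg (by nlinarith) hb.le)]
  have hE : Real.exp (-b * Real.sqrt (γ t)) = (c * (t - t₀)) ^ 2 := by
    rw [hS]
    have : -b * (2 * (-L) / b) = L + L := by field_simp; ring
    rw [this, Real.exp_add, Real.exp_log hu0]
    ring
  -- derivative of M at γ t
  have hCx : HasDerivAt (fun y : ℝ => C / y)
      ((0 * γ t - C * 1) / γ t ^ 2) (γ t) :=
    (hasDerivAt_const (γ t) C).div (hasDerivAt_id (γ t)) hγpos.ne'
  have hsqrt : HasDerivAt Real.sqrt (1 / (2 * Real.sqrt (γ t))) (γ t) :=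
    Real.hasDerivAt_sqrt hγpos.ne'
  have hexp : HasDerivAt (fun y : ℝ => Real.exp (-b * Real.sqrt y))
      (Real.exp (-b * Real.sqrt (γ t)) * (-b * (1 / (2 * Real.sqrt (γ t))))) (γ t) :=
    (hsqrt.const_mul (-b)).exp
  have hM' : HasDerivAt M
      ((0 * γ t - C * 1) / γ t ^ 2 * Real.exp (-b * Real.sqrt (γ t))
        + C / γ t * (Real.exp (-b * Real.sqrt (γ t)) * (-b * (1 / (2 * Real.sqrt (γ t)))))) (γ t) := by
    rw [hMdef]
    exact hCx.mul hexp
  have hdM := hM'.deriv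
  -- final computation
  have hMval : M (γ t) = C / (4 / b ^ 2 * L ^ 2) * (c * (t - t₀)) ^ 2 := by
    rw [hMdef]
    simp only
    rw [hE, hγt]
  have hgval : g t = 8 / b ^ 2 * (L * (t - t₀)⁻¹) := rfl
  constructor
  · rw [hd1, hgval, hMval]
    field_simp
    ring
  · rw [hd1, hd2, hdM, hgval, hMval, hE, hS, hγt]
    field_simp
    ring
end

section
/- Fix ħ > 0, m > 0, w > 0 and 𝒱 > ħ²/(m w²), and define E : (0,∞) → ℝ by E(a) = ħ²/(2 m a²) − 𝒱 w²/(w² + 2a²). Then E has a unique critical point on (0,∞), located at a_⊥ with a_⊥² = ħ w² / (2 (w √(m 𝒱) − ħ)), equivalently a_⊥ = w / √(2 w √(m 𝒱)/ħ − 2), and this critical point is the global minimum of E on (0,∞). -/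
set_option maxHeartbeats 2000000 in
/-- For `ℏ, m, w > 0` and `𝒱 > ℏ²/(m w²)`, the variational energy
`E(a) = ℏ²/(2 m a²) − 𝒱 w²/(w² + 2a²)` has a unique critical point on `(0, ∞)`,
located at `a⊥ = w / √(2 w √(m𝒱)/ℏ − 2)`, with `a⊥² = ℏ w² / (2 (w √(m𝒱) − ℏ))`,
and this critical point is the global minimum of `E` on `(0, ∞)`. -/
theorem gaussian_variational_width_minimizer
    (hbar m w V : ℝ) (hhbar : 0 < hbar) (hm : 0 < m) (hw : 0 < w)
    (hV : hbar ^ 2 / (m * w ^ 2) < V)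
    (E : ℝ → ℝ)
    (hE : E = fun a => hbar ^ 2 / (2 * m * a ^ 2) - V * w ^ 2 / (w ^ 2 + 2 * a ^ 2))
    (aperp : ℝ)
    (haperp : aperp = w / Real.sqrt (2 * w * Real.sqrt (m * V) / hbar - 2)) :
    0 < aperp
    ∧ aperp ^ 2 = hbar * w ^ 2 / (2 * (w * Real.sqrt (m * V) - hbar))
    ∧ deriv E aperp = 0
    ∧ (∀ a : ℝ, 0 < a → deriv E a = 0 → a = aperp)
    ∧ (∀ a : ℝ, 0 < a → E aperp ≤ E a) := by
  have hV0 : 0 < V := lt_trans (by positivity) hV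
  set s := Real.sqrt (m * V) with hs
  have hs0 : 0 < s := Real.sqrt_pos.2 (by positivity)
  have hs2 : s ^ 2 = m * V := Real.sq_sqrt (by positivity)
  have hws : hbar < w * s := by
    have h1 : hbar ^ 2 < (w * s) ^ 2 := by
      rw [div_lt_iff₀ (by positivity)] at hV
      nlinarith
    have h2 := Real.sqrt_lt_sqrt (sq_nonneg hbar) h1
    rwa [Real.sqrt_sq hhbar.le, Real.sqrt_sq (by positivity)] at h2
  have hwsh : 0 < w * s - hbar := sub_pos.2 hws
  have hu : 0 < 2 * w * s / hbar - 2 := by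
    rw [sub_pos, lt_div_iff₀ hhbar]; nlinarith
  have hap : 0 < aperp := by
    rw [haperp]; exact div_pos hw (Real.sqrt_pos.2 hu)
  have hap2 : aperp ^ 2 = hbar * w ^ 2 / (2 * (w * s - hbar)) := by
    rw [haperp, div_pow, Real.sq_sqrt hu.le]
    rw [div_eq_div_iff (by positivity) (by positivity)]
    field_simp
  have hx0 : 0 < aperp ^ 2 := pow_pos hap 2
  have hD0 : 0 < w ^ 2 + 2 * aperp ^ 2 := by positivity
  have hkey : hbar * (w ^ 2 + 2 * aperp ^ 2) = 2 * s * w * aperp ^ 2 := by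
    rw [hap2]
    field_simp
    ring
  have hkey2 : hbar ^ 2 * (w ^ 2 + 2 * aperp ^ 2) ^ 2 = 4 * m * V * w ^ 2 * (aperp ^ 2) ^ 2 := by
    linear_combination (hbar * (w ^ 2 + 2 * aperp ^ 2) + 2 * s * w * aperp ^ 2) * hkey
      + 4 * w ^ 2 * (aperp ^ 2) ^ 2 * hs2
  -- derivative formula
  have hd : ∀ a : ℝ, a ≠ 0 → HasDerivAt E
      (V * w ^ 2 * (4 * a) / (w ^ 2 + 2 * a ^ 2) ^ 2
        - hbar ^ 2 * (2 * m * (2 * a)) / (2 * m * a ^ 2) ^ 2) a := by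
    intro a ha
    rw [hE]
    have h1 : HasDerivAt (fun a : ℝ => 2 * m * a ^ 2) (2 * m * (2 * a)) a := by
      simpa using ((hasDerivAt_pow 2 a).const_mul (2 * m))
    have h2 : HasDerivAt (fun a : ℝ => w ^ 2 + 2 * a ^ 2) (2 * (2 * a)) a := by
      simpa using (((hasDerivAt_pow 2 a).const_mul 2).const_add (w ^ 2))
    have hden1 : 2 * m * a ^ 2 ≠ 0 := by
      exact mul_ne_zero (by positivity) (pow_ne_zero 2 ha)
    have hden2 : w ^ 2 + 2 * a ^ 2 ≠ 0 := by positivity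
    have := ((hasDerivAt_const a (hbar ^ 2)).div h1 hden1).sub
      ((hasDerivAt_const a (V * w ^ 2)).div h2 hden2)
    refine this.congr_deriv ?_
    ring
  have hderiv0 : deriv E aperp = 0 := by
    rw [(hd aperp hap.ne').deriv]
    rw [sub_eq_zero, div_eq_div_iff (by positivity) (by positivity)]
    linear_combination (-4 * m * aperp) * hkey2
  refine ⟨hap, hap2, hderiv0, ?_, ?_⟩
  · intro a ha hcrit
    rw [(hd a ha.ne').deriv, sub_eq_zero,
      div_eq_div_iff (by positivity) (by positivity)] at hcrit
    have hpoly : hbar ^ 2 * (w ^ 2 + 2 * a ^ 2) ^ 2 = 4 * m * V * w ^ 2 * (a ^ 2) ^ 2 := by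
      have h4 : (4 * m * a) ≠ 0 := by positivity
      apply mul_left_cancel₀ h4
      linear_combination -hcrit
    have hsq : (hbar * (w ^ 2 + 2 * a ^ 2)) ^ 2 = (2 * s * w * a ^ 2) ^ 2 := by
      linear_combination hpoly - 4 * w ^ 2 * (a ^ 2) ^ 2 * hs2
    have hfac : (hbar * (w ^ 2 + 2 * a ^ 2) - 2 * s * w * a ^ 2)
        * (hbar * (w ^ 2 + 2 * a ^ 2) + 2 * s * w * a ^ 2) = 0 := by
      linear_combination hsq
    have h3 : hbar * (w ^ 2 + 2 * a ^ 2) = 2 * s * w * a ^ 2 := by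
      rcases mul_eq_zero.1 hfac with h | h
      · linarith [sub_eq_zero.1 h]
      · exfalso
        have hp1 : 0 < hbar * (w ^ 2 + 2 * a ^ 2) :=
          mul_pos hhbar (by positivity)
        have hp2 : 0 < 2 * s * w * a ^ 2 := by positivity
        linarith
    have hseq : a ^ 2 = aperp ^ 2 := by
      rw [hap2, eq_div_iff (by positivity)]
      linear_combination -h3
    have : (a - aperp) * (a + aperp) = 0 := by linear_combination hseq
    rcases mul_eq_zero.1 this with h | h
    · linarith [sub_eq_zero.1 h]
    · nlinarith
  · intro a ha
    have hx : 0 < a ^ 2 := pow_pos ha 2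
    have hD : 0 < w ^ 2 + 2 * a ^ 2 := by positivity
    have hfacpos : 0 ≤ 2 * m * V * w ^ 2 * aperp ^ 2 - hbar ^ 2 * (w ^ 2 + 2 * aperp ^ 2) := by
      have h9 : 2 * m * V * w ^ 2 * aperp ^ 2 - hbar ^ 2 * (w ^ 2 + 2 * aperp ^ 2)
          = 2 * m * V * w ^ 4 * aperp ^ 2 / (w ^ 2 + 2 * aperp ^ 2) := by
        rw [eq_div_iff hD0.ne']
        linear_combination -hkey2
      rw [h9]; positivity
    have hId : E a - E aperp = (a ^ 2 - aperp ^ 2) ^ 2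
        * (2 * m * V * w ^ 2 * aperp ^ 2 - hbar ^ 2 * (w ^ 2 + 2 * aperp ^ 2))
        / (m * a ^ 2 * aperp ^ 2 * (w ^ 2 + 2 * a ^ 2) * (w ^ 2 + 2 * aperp ^ 2)) := by
      rw [hE]
      field_simp
      linear_combination (aperp ^ 2 - a ^ 2) * hkey2
    have : 0 ≤ E a - E aperp := by
      rw [hId]
      positivity
    linarith
end
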